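/- For every injective map x : Fin n → ℝ, the number of secure ordered pairs, i.e., ordered pairs (u,v) of distinct indices of Fin n for which there exists an index ℓ with x ℓ = 2·(x v) − (x u), is at most n²/2. -/

import Mathlib

section SecureAux

lemma secure_step_sum (n : ℕ) : (∑ k ∈ Finset.range (n+2), min k (n + 1 - k))
    = (∑ k ∈ Finset.range n, min k (n - 1 - k)) + n := by
  rw [Finset.sum_range_succ' (fun k => min k (n + 1 - k)) (n+1)]
  rw [Finset.sum_range_succ]
  have h1 : ∀ i ∈ Finset.range n, min (i+1) (n + 1 - (i+1)) = min i (n - 1 - i) + 1 := by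
    intro i hi
    simp only [Finset.mem_range] at hi
    omega
  rw [Finset.sum_congr rfl h1, Finset.sum_add_distrib, Finset.sum_const, Finset.card_range]
  simp

lemma secure_key_sum : ∀ n : ℕ, 4 * (∑ k ∈ Finset.range n, min k (n - 1 - k)) ≤ n ^ 2 := by
  intro n
  induction n using Nat.strong_induction_on with
  | _ n ih =>
    match n with
    | 0 => simp
    | 1 => simp
    | (m+2) =>
      have hstep := secure_step_sum m
      have hm : m + 2 - 1 = m + 1 := by omega
      rw [hm, hstep]
      have := ih m (by omega)
      nlinarith

variable {n : ℕ} (x : Fin n → ℝ)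

noncomputable def bl (v : Fin n) : ℕ := (Finset.univ.filter (fun w => x w < x v)).card
noncomputable def au (v : Fin n) : ℕ := (Finset.univ.filter (fun w => x v < x w)).card

lemma bl_add_au (hx : Function.Injective x) (v : Fin n) : bl x v + au x v = n - 1 := by
  classical
  have hdisj : Disjoint (Finset.univ.filter (fun w => x w < x v))
      (Finset.univ.filter (fun w => x v < x w)) := by
    simp [Finset.disjoint_filter]
    intro a h; linarith
  have hunion : (Finset.univ.filter (fun w => x w < x v)) ∪
      (Finset.univ.filter (fun w => x v < x w)) = Finset.univ.erase v := by
    ext w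
    simp only [Finset.mem_union, Finset.mem_filter, Finset.mem_univ, true_and,
      Finset.mem_erase, and_true]
    constructor
    · rintro (h | h) rfl <;> linarith
    · intro h
      rcases lt_or_gt_of_ne (fun he : x w = x v => h (hx he)) with h' | h'
      · exact Or.inl h'
      · exact Or.inr h'
  have := Finset.card_union_of_disjoint hdisj
  rw [hunion] at this
  simp [bl, au, ← this]

lemma bl_lt (v : Fin n) : bl x v < n := by
  have : (Finset.univ.filter (fun w => x w < x v)) ⊂ Finset.univ := by
    rw [Finset.ssubset_univ_iff]
    intro h
    have hv := Finset.mem_univ v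
    rw [← h] at hv
    simp at hv
  simpa [bl] using Finset.card_lt_card this

lemma bl_strictmono {v w : Fin n} (h : x v < x w) : bl x v < bl x w := by
  apply Finset.card_lt_card
  rw [Finset.ssubset_iff_of_subset]
  · exact ⟨v, by simp [h], by simp⟩
  · intro u hu
    simp only [Finset.mem_filter, Finset.mem_univ, true_and] at hu ⊢
    linarith

lemma bl_inj (hx : Function.Injective x) : Function.Injective (bl x) := by
  intro v w h
  by_contra hne
  rcases lt_or_gt_of_ne (fun he : x v = x w => hne (hx he)) with h' | h'
  · exact absurd h (Nat.ne_of_lt (bl_strictmono x h'))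
  · exact absurd h.symm (Nat.ne_of_lt (bl_strictmono x h'))

lemma image_bl (hx : Function.Injective x) : Finset.univ.image (bl x) = Finset.range n := by
  apply Finset.eq_of_subset_of_card_le
  · intro k hk
    simp only [Finset.mem_image] at hk
    obtain ⟨v, _, rfl⟩ := hk
    simp [Finset.mem_range, bl_lt x v]
  · rw [Finset.card_range, Finset.card_image_of_injective _ (bl_inj x hx)]
    simp

lemma fiber_bound (hx : Function.Injective x) (v : Fin n) :
    (Finset.univ.filter (fun u : Fin n => u ≠ v ∧ ∃ ℓ : Fin n, x ℓ = 2 * x v - x u)).card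
      ≤ 2 * min (bl x v) (au x v) := by
  classical
  set Aneg := Finset.univ.filter (fun u : Fin n => x u < x v ∧ ∃ ℓ : Fin n, x ℓ = 2 * x v - x u)
    with hAneg
  set Apos := Finset.univ.filter (fun u : Fin n => x v < x u ∧ ∃ ℓ : Fin n, x ℓ = 2 * x v - x u)
    with hApos
  have hsub : (Finset.univ.filter (fun u : Fin n => u ≠ v ∧ ∃ ℓ : Fin n, x ℓ = 2 * x v - x u))
      ⊆ Aneg ∪ Apos := by
    intro u hu
    simp only [Finset.mem_filter, Finset.mem_univ, true_and] at hu
    obtain ⟨hne, hex⟩ := hu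
    have : x u ≠ x v := fun h => hne (hx h)
    rcases lt_or_gt_of_ne this with h | h
    · exact Finset.mem_union_left _ (by simp [hAneg, h, hex])
    · exact Finset.mem_union_right _ (by simp [hApos, h, hex])
  set f : Fin n → Fin n := fun u =>
    if h : ∃ ℓ : Fin n, x ℓ = 2 * x v - x u then h.choose else v with hf
  have hfval : ∀ u : Fin n, (∃ ℓ : Fin n, x ℓ = 2 * x v - x u) → x (f u) = 2 * x v - x u := by
    intro u h
    simp only [hf, dif_pos h]
    exact h.choose_spec
  have hneg1 : Aneg.card ≤ bl x v := by
    apply Finset.card_le_card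
    intro u hu
    simp only [hAneg, Finset.mem_filter, Finset.mem_univ, true_and] at hu
    simp [bl, hu.1]
  have hneg2 : Aneg.card ≤ au x v := by
    apply Finset.card_le_card_of_injOn f
    · intro u hu
      simp only [hAneg, Finset.mem_coe, Finset.mem_filter, Finset.mem_univ, true_and] at hu
      have := hfval u hu.2
      simp only [au, Finset.mem_coe, Finset.mem_filter, Finset.mem_univ, true_and]
      rw [this]; linarith [hu.1]
    · intro u hu u' hu' h
      simp only [hAneg, Finset.coe_filter, Set.mem_setOf_eq] at hu hu'
      have e1 := hfval u hu.2.2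
      have e2 := hfval u' hu'.2.2
      rw [h, e2] at e1
      exact hx (by linarith : x u = x u')
  have hpos1 : Apos.card ≤ au x v := by
    apply Finset.card_le_card
    intro u hu
    simp only [hApos, Finset.mem_filter, Finset.mem_univ, true_and] at hu
    simp [au, hu.1]
  have hpos2 : Apos.card ≤ bl x v := by
    apply Finset.card_le_card_of_injOn f
    · intro u hu
      simp only [hApos, Finset.mem_coe, Finset.mem_filter, Finset.mem_univ, true_and] at hu
      have := hfval u hu.2
      simp only [bl, Finset.mem_coe, Finset.mem_filter, Finset.mem_univ, true_and]
      rw [this]; linarith [hu.1]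
    · intro u hu u' hu' h
      simp only [hApos, Finset.coe_filter, Set.mem_setOf_eq] at hu hu'
      have e1 := hfval u hu.2.2
      have e2 := hfval u' hu'.2.2
      rw [h, e2] at e1
      exact hx (by linarith : x u = x u')
  calc (Finset.univ.filter (fun u : Fin n => u ≠ v ∧ ∃ ℓ : Fin n, x ℓ = 2 * x v - x u)).card
      ≤ (Aneg ∪ Apos).card := Finset.card_le_card hsub
    _ ≤ Aneg.card + Apos.card := Finset.card_union_le _ _
    _ ≤ 2 * min (bl x v) (au x v) := by omega

end SecureAux

/-- The number of secure ordered pairs of distinct indices is at most `n² / 2`. -/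
theorem statement16 {n : ℕ} (x : Fin n → ℝ) (hx : Function.Injective x) :
    (({p : Fin n × Fin n | p.1 ≠ p.2 ∧
        ∃ ℓ : Fin n, x ℓ = 2 * x p.2 - x p.1}).ncard : ℝ) ≤ (n : ℝ) ^ 2 / 2 := by
  classical
  set F : Finset (Fin n × Fin n) :=
    Finset.univ.filter (fun p => p.1 ≠ p.2 ∧ ∃ ℓ : Fin n, x ℓ = 2 * x p.2 - x p.1) with hF
  have hSF : ({p : Fin n × Fin n | p.1 ≠ p.2 ∧
      ∃ ℓ : Fin n, x ℓ = 2 * x p.2 - x p.1}).ncard = F.card := by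
    rw [show ({p : Fin n × Fin n | p.1 ≠ p.2 ∧
        ∃ ℓ : Fin n, x ℓ = 2 * x p.2 - x p.1} : Set (Fin n × Fin n)) = ↑F from by
      ext p; simp [hF]]
    exact Set.ncard_coe_finset F
  have hfib : F.card = ∑ v : Fin n, (F.filter (fun p => p.2 = v)).card :=
    Finset.card_eq_sum_card_fiberwise (fun p _ => Finset.mem_univ p.2)
  have hfibv : ∀ v : Fin n, (F.filter (fun p => p.2 = v)).card
      = (Finset.univ.filter (fun u : Fin n => u ≠ v ∧ ∃ ℓ : Fin n, x ℓ = 2 * x v - x u)).card := by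
    intro v
    apply Finset.card_bij (fun p _ => p.1)
    · intro p hp
      simp only [hF, Finset.mem_filter, Finset.mem_univ, true_and] at hp ⊢
      obtain ⟨⟨h1, h2⟩, h3⟩ := hp
      subst h3
      exact ⟨h1, h2⟩
    · intro p hp q hq h
      simp only [hF, Finset.mem_filter] at hp hq
      exact Prod.ext h (hp.2.trans hq.2.symm)
    · intro u hu
      simp only [Finset.mem_filter, Finset.mem_univ, true_and] at hu
      exact ⟨(u, v), by simp [hF, hu.1, hu.2], rfl⟩
  have hbound : F.card ≤ 2 * ∑ k ∈ Finset.range n, min k (n - 1 - k) := by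
    rw [hfib]
    calc ∑ v : Fin n, (F.filter (fun p => p.2 = v)).card
        ≤ ∑ v : Fin n, 2 * min (bl x v) (au x v) := by
          apply Finset.sum_le_sum
          intro v _
          rw [hfibv v]
          exact fiber_bound x hx v
      _ = ∑ v : Fin n, 2 * min (bl x v) (n - 1 - bl x v) := by
          apply Finset.sum_congr rfl
          intro v _
          have h := bl_add_au x hx v
          have : au x v = n - 1 - bl x v := by omega
          rw [this]
      _ = 2 * ∑ v : Fin n, min (bl x v) (n - 1 - bl x v) := by rw [Finset.mul_sum]
      _ = 2 * ∑ k ∈ Finset.range n, min k (n - 1 - k) := by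
          rw [← image_bl x hx, Finset.sum_image (fun a _ b _ h => bl_inj x hx h)]
  have h4 := secure_key_sum n
  have hmain : 2 * F.card ≤ n ^ 2 := by nlinarith
  rw [hSF]
  rw [le_div_iff₀ (by norm_num : (0:ℝ) < 2)]
  have hcast : ((2 * F.card : ℕ) : ℝ) ≤ ((n ^ 2 : ℕ) : ℝ) := Nat.cast_le.mpr hmain
  push_cast at hcast
  linarith
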